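/- (Lemma 2, properness/invertibility.) Define r(f) = −ℓ'(+1, f)/ℓ'(−1, f) = (ω₊/ω₋)·[exp(γ·δ₊ − γ·f)/(1 + exp(γ·δ₊ − γ·f))]·[(1 + exp(γ·δ₋ + γ·f))/exp(γ·δ₋ + γ·f)] and Ψ⁻¹(f) = 1/(1 + r(f)). Then Ψ⁻¹ is a strictly increasing bijection from ℝ onto the open interval (0,1); consequently the binary pairwise margin loss is proper composite with invertible link Ψ. -/

import Mathlib

open Filter Topology

/-- Lemma 2 (properness): the inverse link `Ψ⁻¹(f) = 1 / (1 + r f)` of the binary pairwise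
margin loss is a strictly increasing bijection from ℝ onto (0, 1). -/
theorem binary_pairwise_margin_inverse_link_bijective
    (ωp ωm γ : ℝ) (hωp : 0 < ωp) (hωm : 0 < ωm) (hγ : 0 < γ)
    (δp δm : ℝ)
    (r Ψinv : ℝ → ℝ)
    (hr : ∀ f : ℝ, r f = (ωp / ωm) *
      (Real.exp (γ * δp - γ * f) / (1 + Real.exp (γ * δp - γ * f))) *
      ((1 + Real.exp (γ * δm + γ * f)) / Real.exp (γ * δm + γ * f)))
    (hΨ : ∀ f : ℝ, Ψinv f = 1 / (1 + r f)) :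
    StrictMono Ψinv ∧ Set.range Ψinv = Set.Ioo (0 : ℝ) 1 := by
  set c := ωp / ωm with hc
  have hcpos : 0 < c := div_pos hωp hωm
  -- cleaner form of r
  have hr' : ∀ f, r f = c * (1 / (Real.exp (γ * f - γ * δp) + 1)) *
      (Real.exp (-(γ * δm) - γ * f) + 1) := by
    intro f
    rw [hr, show γ * f - γ * δp = -(γ * δp - γ * f) by ring,
      show -(γ * δm) - γ * f = -(γ * δm + γ * f) by ring, Real.exp_neg, Real.exp_neg]
    have h1 : (0:ℝ) < Real.exp (γ * δp - γ * f) := Real.exp_pos _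
    have h2 : (0:ℝ) < Real.exp (γ * δm + γ * f) := Real.exp_pos _
    field_simp
  have hrpos : ∀ f, 0 < r f := by
    intro f; rw [hr']; positivity
  -- strictly decreasing
  have hanti : StrictAnti r := by
    intro a b hab
    rw [hr' a, hr' b]
    have h1 : Real.exp (γ * a - γ * δp) < Real.exp (γ * b - γ * δp) := by
      apply Real.exp_lt_exp.mpr; nlinarith
    have h2 : Real.exp (-(γ * δm) - γ * b) < Real.exp (-(γ * δm) - γ * a) := by
      apply Real.exp_lt_exp.mpr; nlinarith
    have hg1 : 1 / (Real.exp (γ * b - γ * δp) + 1) < 1 / (Real.exp (γ * a - γ * δp) + 1) := by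
      apply one_div_lt_one_div_of_lt (by positivity) (by linarith)
    have hA : c * (1 / (Real.exp (γ * b - γ * δp) + 1)) <
        c * (1 / (Real.exp (γ * a - γ * δp) + 1)) :=
      mul_lt_mul_of_pos_left hg1 hcpos
    apply mul_lt_mul'' hA (by linarith) (by positivity) (by positivity)
  have hmono : StrictMono Ψinv := by
    intro a b hab
    rw [hΨ a, hΨ b]
    have := hanti hab
    apply one_div_lt_one_div_of_lt (by linarith [hrpos b]) (by linarith)
  refine ⟨hmono, ?_⟩
  -- continuity of r
  have hcont : Continuous r := by
    have : r = fun f => c * (1 / (Real.exp (γ * f - γ * δp) + 1)) *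
        (Real.exp (-(γ * δm) - γ * f) + 1) := funext hr'
    rw [this]
    have h1 : Continuous fun f : ℝ => Real.exp (γ * f - γ * δp) + 1 :=
      (Real.continuous_exp.comp ((continuous_const.mul continuous_id).sub continuous_const)).add
        continuous_const
    have h2 : Continuous fun f : ℝ => Real.exp (-(γ * δm) - γ * f) + 1 :=
      (Real.continuous_exp.comp (continuous_const.sub
        (continuous_const.mul continuous_id))).add continuous_const
    exact ((continuous_const.mul (continuous_const.div h1 (fun x => by positivity))).mul h2)
  -- limit at +∞ : r → 0
  have harg1 : Tendsto (fun f : ℝ => γ * f - γ * δp) atTop atTop := by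
    apply tendsto_atTop_add_const_right
    exact Tendsto.const_mul_atTop hγ tendsto_id
  have harg2 : Tendsto (fun f : ℝ => -(γ * δm) - γ * f) atTop atBot := by
    apply tendsto_atBot_add_const_left
    have : Tendsto (fun f : ℝ => γ * f) atTop atTop := Tendsto.const_mul_atTop hγ tendsto_id
    exact tendsto_neg_atBot_iff.mpr this
  have hlim0 : Tendsto r atTop (𝓝 0) := by
    have hg1 : Tendsto (fun f : ℝ => 1 / (Real.exp (γ * f - γ * δp) + 1)) atTop (𝓝 0) := by
      simp only [one_div]
      exact Tendsto.comp tendsto_inv_atTop_zero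
        (tendsto_atTop_add_const_right _ 1 (Real.tendsto_exp_atTop.comp harg1))
    have hg2 : Tendsto (fun f : ℝ => Real.exp (-(γ * δm) - γ * f) + 1) atTop (𝓝 (0 + 1)) :=
      (Real.tendsto_exp_atBot.comp harg2).add tendsto_const_nhds
    have := ((tendsto_const_nhds (x := c)).mul hg1).mul hg2
    simp only [mul_zero, zero_mul] at this
    have heq : r = fun f => c * (1 / (Real.exp (γ * f - γ * δp) + 1)) *
        (Real.exp (-(γ * δm) - γ * f) + 1) := funext hr'
    rw [heq]
    exact this
  -- limit at -∞ : r → +∞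
  have hlimtop : Tendsto r atBot atTop := by
    have harg1' : Tendsto (fun f : ℝ => γ * f - γ * δp) atBot atBot := by
      apply tendsto_atBot_add_const_right
      exact Tendsto.const_mul_atBot hγ tendsto_id
    have harg2' : Tendsto (fun f : ℝ => -(γ * δm) - γ * f) atBot atTop := by
      apply tendsto_atTop_add_const_left
      have : Tendsto (fun f : ℝ => γ * f) atBot atBot := Tendsto.const_mul_atBot hγ tendsto_id
      exact tendsto_neg_atTop_iff.mpr this
    have hg1 : Tendsto (fun f : ℝ => c * (1 / (Real.exp (γ * f - γ * δp) + 1))) atBot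
        (𝓝 (c * (1 / (0 + 1)))) := by
      apply Tendsto.mul tendsto_const_nhds
      apply Tendsto.div tendsto_const_nhds
      · exact (Real.tendsto_exp_atBot.comp harg1').add tendsto_const_nhds
      · norm_num
    have hg2 : Tendsto (fun f : ℝ => Real.exp (-(γ * δm) - γ * f) + 1) atBot atTop :=
      tendsto_atTop_add_const_right _ 1 (Real.tendsto_exp_atTop.comp harg2')
    have hclim : (0:ℝ) < c * (1 / (0 + 1)) := by norm_num; exact hcpos
    have := Tendsto.pos_mul_atTop hclim hg1 hg2
    have heq : r = fun f => c * (1 / (Real.exp (γ * f - γ * δp) + 1)) *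
        (Real.exp (-(γ * δm) - γ * f) + 1) := funext hr'
    rw [heq]
    exact this
  -- range
  ext y
  simp only [Set.mem_range, Set.mem_Ioo]
  constructor
  · rintro ⟨f, rfl⟩
    rw [hΨ]
    constructor
    · exact div_pos one_pos (by linarith [hrpos f])
    · rw [div_lt_one (by linarith [hrpos f])]
      linarith [hrpos f]
  · rintro ⟨hy0, hy1⟩
    set t := (1 - y) / y with hts
    have ht : 0 < t := div_pos (by linarith) hy0
    -- find b with r b < t
    obtain ⟨b, hb⟩ := (hlim0.eventually (gt_mem_nhds ht)).exists
    -- find a with t ≤ r a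
    obtain ⟨a, ha⟩ := (hlimtop.eventually_ge_atTop t).exists
    have hab : a ≤ b := by
      by_contra h
      push_neg at h
      have := hanti h
      linarith
    have hmem : t ∈ Set.Icc (r b) (r a) := ⟨le_of_lt hb, ha⟩
    obtain ⟨f, _, hf⟩ := intermediate_value_Icc' hab hcont.continuousOn hmem
    refine ⟨f, ?_⟩
    rw [hΨ, hf, hts]
    field_simp
    ring
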